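/- Convergence of the Markov-chain LP hierarchy: for every Δ > 1, b ≥ 1 and c₁, c₂ > 0, there exist constants C₁, C₂ > 0 (depending only on Δ, b, c₁, c₂) such that the following holds. Let G be a finite graph on n vertices with maximum degree at most Δ, let μ be the Gibbs distribution of a spin system on G, and let P be a local Markov chain satisfying sup over probability distributions ν₀ of ‖ν₀P^t - μ‖₁ ≤ c₁·n·(1-c₂/n)^t for all t ≥ 0. Then for every f : S → ℝ supported on a set B with |B| ≤ b and every Λ with B ⊆ Λ ⊆ V, max{ν(f) : ν ∈ LP_{Λ,MC}} - min{ν(f) : ν ∈ LP_{Λ,MC}} ≤ C₁·n·‖f‖_∞·e^{-C₂·dist(B,Λ^c)}. -/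

import Mathlib

namespace GibbsLP

variable {V : Type*} [Fintype V] [DecidableEq V]

/-- Spin configurations on the vertex set `V`; the two spin values `-1, +1` are
encoded by the two-element type `Bool`. -/
abbrev Config (V : Type*) := V → Bool

/-- The configuration `x` with the spin at site `i` flipped (denoted `xⁱ` in the paper). -/
def flip (x : Config V) (i : V) : Config V := Function.update x i (!x i)

/-- Discrete gradient `∇ᵢ f (x) = f(xⁱ) - f(x)`. -/
def grad (f : Config V → ℝ) (i : V) (x : Config V) : ℝ := f (flip x i) - f x

/-- `f` depends only on the spins in `Λ`, i.e. `supp f ⊆ Λ`. -/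
def SupportedOn (f : Config V → ℝ) (Λ : Set V) : Prop :=
  ∀ i ∉ Λ, ∀ x, f (flip x i) = f x

/-- The support `supp f = {i : ∇ᵢ f ≠ 0}` of an observable. -/
def sptSet (f : Config V → ℝ) : Set V := {i | ∃ x, f (flip x i) ≠ f x}

/-- Sup norm of an observable. -/
noncomputable def supNorm {α : Type*} (f : α → ℝ) : ℝ := ⨆ x, |f x|

/-- The Hamiltonian `H(x) = β ∑_{{i,j} ∈ E} h_{ij}(x_i, x_j)`; each unordered edge is
counted once (hence the factor `1/2` for the ordered double sum). -/
noncomputable def ham (G : SimpleGraph V) [DecidableRel G.Adj] (β : ℝ)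
    (h : V → V → Bool → Bool → ℝ) (x : Config V) : ℝ :=
  β * ((1 : ℝ) / 2 * ∑ i : V, ∑ j : V, if G.Adj i j then h i j (x i) (x j) else 0)

/-- The Gibbs distribution `μ(x) = e^{-H(x)} / Z`. -/
noncomputable def gibbs (H : Config V → ℝ) (x : Config V) : ℝ :=
  Real.exp (-H x) / ∑ y : Config V, Real.exp (-H y)

/-- `ν` is a probability distribution. -/
def IsDist {α : Type*} [Fintype α] (ν : α → ℝ) : Prop :=
  (∀ a, 0 ≤ ν a) ∧ ∑ a, ν a = 1

/-- Spin configurations on a subset `A ⊆ V`. -/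
abbrev SubConfig {V : Type*} (A : Finset V) := {i : V // i ∈ A} → Bool

/-- Restriction of a configuration to `A`. -/
def restrict (A : Finset V) (x : Config V) : SubConfig A := fun i => x i.1

/-- Extension of a configuration on `A` to all of `V` (by an arbitrary fixed value outside). -/
def extendC (A : Finset V) (y : SubConfig A) : Config V :=
  fun i => if h : i ∈ A then y ⟨i, h⟩ else true

/-- Flip the spin of `y : SubConfig A` at site `i` (identity if `i ∉ A`). -/
def flipAt (A : Finset V) (y : SubConfig A) (i : V) : SubConfig A :=
  fun j => if j.1 = i then !(y j) else y j

/-- External boundary `∂ᵉˣ Λ = {j ∉ Λ : ∃ i ∈ Λ, {i,j} ∈ E}`. -/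
def extBoundary (G : SimpleGraph V) [DecidableRel G.Adj] (Λ : Finset V) : Finset V :=
  Finset.univ.filter fun j => j ∉ Λ ∧ ∃ i ∈ Λ, G.Adj i j

/-- External boundary of a set of vertices (set version). -/
def extBoundarySet (G : SimpleGraph V) (A : Set V) : Set V :=
  {j | j ∉ A ∧ ∃ i ∈ A, G.Adj i j}

/-- `Λ̄ = Λ ∪ ∂ᵉˣ Λ`. -/
def closure (G : SimpleGraph V) [DecidableRel G.Adj] (Λ : Finset V) : Finset V :=
  Λ ∪ extBoundary G Λ

/-- `∇ᵢ H` evaluated on a configuration on `A` (well defined for `i ∈ Λ`, `A = Λ̄`, since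
then `∇ᵢ H` only depends on the spins in `Λ̄`). -/
noncomputable def gradH (A : Finset V) (H : Config V → ℝ) (i : V) (y : SubConfig A) : ℝ :=
  H (flip (extendC A y) i) - H (extendC A y)

/-- Expectation `ν(f)` of an observable `f` supported in `A` under a distribution `ν` on
`Σ^A`. -/
noncomputable def lexp {A : Finset V} (ν : SubConfig A → ℝ) (f : Config V → ℝ) : ℝ :=
  ∑ y : SubConfig A, ν y * f (extendC A y)

/-- The DLR linear program: distributions on `Σ^{Λ̄}` satisfying the local spin-flip
equations `ν(y) = ν(yⁱ) e^{∇ᵢH(y)}` for all `y` and `i ∈ Λ`. -/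
def LPdlr (G : SimpleGraph V) [DecidableRel G.Adj] (H : Config V → ℝ) (Λ : Finset V) :
    Set (SubConfig (closure G Λ) → ℝ) :=
  {ν | IsDist ν ∧ ∀ y, ∀ i ∈ Λ,
      ν y = ν (flipAt (closure G Λ) y i) * Real.exp (gradH (closure G Λ) H i y)}

/-- Values `ν(f)` over feasible points `ν` of the DLR linear program. -/
def dlrVals (G : SimpleGraph V) [DecidableRel G.Adj] (H : Config V → ℝ) (Λ : Finset V)
    (f : Config V → ℝ) : Set ℝ :=
  {t | ∃ ν ∈ LPdlr G H Λ, t = lexp ν f}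

/-- Marginal of a distribution `μ` on `Σ^V` on the sites in `A`. -/
noncomputable def marg (A : Finset V) (μ : Config V → ℝ) : SubConfig A → ℝ :=
  fun y => ∑ x : Config V, if restrict A x = y then μ x else 0

/-- The Hamiltonian truncated to `Λ` with boundary condition `η` on `∂ᵉˣ Λ`. -/
noncomputable def hamLoc (G : SimpleGraph V) [DecidableRel G.Adj] (β : ℝ)
    (h : V → V → Bool → Bool → ℝ) (Λ : Finset V)
    (η : SubConfig (extBoundary G Λ)) (x : SubConfig Λ) : ℝ :=
  β * ((1 : ℝ) / 2 * (∑ i ∈ Λ.attach, ∑ j ∈ Λ.attach,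
        if G.Adj i.1 j.1 then h i.1 j.1 (x i) (x j) else 0)
    + ∑ i ∈ Λ.attach, ∑ j ∈ (extBoundary G Λ).attach,
        if G.Adj i.1 j.1 then h i.1 j.1 (x i) (η j) else 0)

/-- The local Gibbs state `μ_Λ^η` on `Λ` with boundary condition `η`. -/
noncomputable def gibbsLoc (G : SimpleGraph V) [DecidableRel G.Adj] (β : ℝ)
    (h : V → V → Bool → Bool → ℝ) (Λ : Finset V)
    (η : SubConfig (extBoundary G Λ)) (x : SubConfig Λ) : ℝ :=
  Real.exp (-(hamLoc G β h Λ η x)) /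
    ∑ x' : SubConfig Λ, Real.exp (-(hamLoc G β h Λ η x'))

/-- Expectation `μ_Λ^η(f)` of an observable supported in `Λ` under the local Gibbs state. -/
noncomputable def gibbsLocExp (G : SimpleGraph V) [DecidableRel G.Adj] (β : ℝ)
    (h : V → V → Bool → Bool → ℝ) (Λ : Finset V)
    (η : SubConfig (extBoundary G Λ)) (f : Config V → ℝ) : ℝ :=
  ∑ x : SubConfig Λ, gibbsLoc G β h Λ η x * f (extendC Λ x)

/-- Combine `x ∈ Σ^Λ` and `η ∈ Σ^{∂ᵉˣΛ}` into a configuration `(x, η) ∈ Σ^{Λ̄}`. -/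
def glue (G : SimpleGraph V) [DecidableRel G.Adj] (Λ : Finset V)
    (x : SubConfig Λ) (η : SubConfig (extBoundary G Λ)) : SubConfig (closure G Λ) :=
  fun i => if h : i.1 ∈ Λ then x ⟨i.1, h⟩
    else η ⟨i.1, by
      have hi := i.2
      simp only [closure, Finset.mem_union] at hi
      tauto⟩

/-- A local (single-site, finite-range, bounded-rate) Markov chain on `Σ^V`. -/
structure IsLocalMC (G : SimpleGraph V) (P : Config V → Config V → ℝ) : Prop where
  nonneg : ∀ x x', 0 ≤ P x x'
  rowSum : ∀ x, ∑ x', P x x' = 1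
  /-- `P_{x,x'} = 0` if `x'` differs from `x` on more than one site. -/
  singleSite : ∀ x x', x' ≠ x → (∀ i, x' ≠ flip x i) → P x x' = 0
  /-- `P_{x,xⁱ}` only depends on the spins in the closed neighborhood of `i`. -/
  locality : ∀ i : V, ∀ x x' : Config V, x i = x' i →
      (∀ j, G.Adj i j → x j = x' j) → P x (flip x i) = P x' (flip x' i)
  /-- `P_{x,x'} ≤ 1/n` off the diagonal. -/
  bounded : ∀ x x', x ≠ x' → P x x' ≤ 1 / (Fintype.card V : ℝ)

/-- The Markov-chain linear program: distributions on `Σ^{Λ̄}` satisfying the stationarity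
equations `ν(Pg) = ν(g)` for all `g` supported on `Λ`. -/
def LPmc (G : SimpleGraph V) [DecidableRel G.Adj] (P : Config V → Config V → ℝ)
    (Λ : Finset V) : Set (SubConfig (closure G Λ) → ℝ) :=
  {ν | IsDist ν ∧ ∀ g : Config V → ℝ, SupportedOn g ↑Λ →
      lexp ν ((Matrix.of P).mulVec g) = lexp ν g}

/-- Values `ν(f)` over feasible points `ν` of the Markov-chain linear program. -/
def mcVals (G : SimpleGraph V) [DecidableRel G.Adj] (P : Config V → Config V → ℝ)
    (Λ : Finset V) (f : Config V → ℝ) : Set ℝ :=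
  {t | ∃ ν ∈ LPmc G P Λ, t = lexp ν f}

/-- The heat-bath dynamics: site `i` is flipped with probability
`c(i,x) = e^{-∇ᵢH(x)} / (1 + e^{-∇ᵢH(x)})`, each site being selected with probability `1/n`. -/
noncomputable def heatBath (H : Config V → ℝ) (x x' : Config V) : ℝ :=
  if x' = x then
    1 - (∑ i : V, Real.exp (-(grad H i x)) / (1 + Real.exp (-(grad H i x)))) /
      (Fintype.card V : ℝ)
  else
    ∑ i : V, if x' = flip x i then
      (Real.exp (-(grad H i x)) / (1 + Real.exp (-(grad H i x)))) / (Fintype.card V : ℝ)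
    else 0

/-- Marginal on `Σ^A` of a distribution on `Σ^B`, for `A ⊆ B`. -/
noncomputable def margTo {A B : Finset V} (hAB : A ⊆ B) (ν : SubConfig B → ℝ) :
    SubConfig A → ℝ :=
  fun z => ∑ y : SubConfig B,
    if (fun i : {i : V // i ∈ A} => y ⟨i.1, hAB i.2⟩) = z then ν y else 0

theorem closure_mono (G : SimpleGraph V) [DecidableRel G.Adj] {Λ Λ' : Finset V}
    (hs : Λ ⊆ Λ') : closure G Λ ⊆ closure G Λ' := by
  intro j hj
  simp only [closure, Finset.mem_union, extBoundary, Finset.mem_filter, Finset.mem_univ,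
    true_and] at hj ⊢
  by_cases hjΛ' : j ∈ Λ'
  · exact Or.inl hjΛ'
  · rcases hj with hj | ⟨hjn, i, hiΛ, hadj⟩
    · exact absurd (hs hj) hjΛ'
    · exact Or.inr ⟨hjΛ', i, hs hiΛ, hadj⟩


set_option linter.unusedSectionVars false
section Aux
variable {V : Type*} [Fintype V] [DecidableEq V]

lemma flip_apply_self (x : Config V) (i : V) : flip x i i = !x i := by
  simp [flip]

lemma flip_apply_ne (x : Config V) {i j : V} (h : j ≠ i) : flip x i j = x j := by
  simp [flip, Function.update_of_ne h]

lemma flip_flip (x : Config V) (i : V) : flip (flip x i) i = x := by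
  funext j
  by_cases h : j = i
  · subst h; simp [flip]
  · simp [flip, Function.update_of_ne h]

lemma flip_comm (x : Config V) {i j : V} (h : i ≠ j) :
    flip (flip x j) i = flip (flip x i) j := by
  simp only [flip]
  rw [Function.update_of_ne h, Function.update_of_ne (Ne.symm h),
    Function.update_comm (Ne.symm h)]

lemma flip_ne (x : Config V) (i : V) : flip x i ≠ x := by
  intro h
  have := congrFun h i
  rw [flip_apply_self] at this
  simp at this

lemma flip_left_injective (x : Config V) : Function.Injective (flip x) := by
  intro i i' h
  by_contra hne
  have := congrFun h i
  rw [flip_apply_self, flip_apply_ne x hne] at this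
  simp at this

lemma abs_le_supNorm {α : Type*} [Fintype α] [Nonempty α] (f : α → ℝ) (x : α) :
    |f x| ≤ supNorm f := by
  unfold supNorm
  exact le_ciSup (f := fun x => |f x|) (Set.Finite.bddAbove (Set.finite_range _)) x

lemma supNorm_nonneg {α : Type*} [Fintype α] [Nonempty α] (f : α → ℝ) :
    0 ≤ supNorm f :=
  le_trans (abs_nonneg _) (abs_le_supNorm f (Classical.arbitrary α))

end Aux
section Aux2
variable {V : Type*} [Fintype V] [DecidableEq V]
variable {G : SimpleGraph V} {P : Config V → Config V → ℝ}

lemma mulVec_apply (g : Config V → ℝ) (x : Config V) :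
    (Matrix.of P).mulVec g x = ∑ x', P x x' * g x' := rfl

lemma mulVec_abs_le (hP : IsLocalMC G P) {g : Config V → ℝ} {C : ℝ}
    (hC : ∀ x, |g x| ≤ C) (x : Config V) : |(Matrix.of P).mulVec g x| ≤ C := by
  rw [mulVec_apply]
  calc |∑ x', P x x' * g x'| ≤ ∑ x', |P x x' * g x'| := Finset.abs_sum_le_sum_abs _ _
    _ ≤ ∑ x', P x x' * C := by
        refine Finset.sum_le_sum fun x' _ => ?_
        rw [abs_mul, abs_of_nonneg (hP.nonneg x x')]
        exact mul_le_mul_of_nonneg_left (hC x') (hP.nonneg x x')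
    _ = C := by rw [← Finset.sum_mul, hP.rowSum x, one_mul]

lemma pow_mulVec_abs_le (hP : IsLocalMC G P) {g : Config V → ℝ} {C : ℝ}
    (hC : ∀ x, |g x| ≤ C) : ∀ (s : ℕ) (x : Config V), |(Matrix.of P ^ s).mulVec g x| ≤ C := by
  intro s
  induction s with
  | zero => simpa [Matrix.one_mulVec] using hC
  | succ s ih =>
      intro x
      rw [pow_succ', ← Matrix.mulVec_mulVec]
      exact mulVec_abs_le hP ih x

lemma mulVec_rep (hP : IsLocalMC G P) (g : Config V → ℝ) (x : Config V) :
    (Matrix.of P).mulVec g x = g x + ∑ i, P x (flip x i) * grad g i x := by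
  rw [mulVec_apply]
  have h2 : ∀ x' : Config V, P x x' * g x' = P x x' * (g x' - g x) + P x x' * g x := by
    intro x'; ring
  rw [Finset.sum_congr rfl fun x' _ => h2 x', Finset.sum_add_distrib, ← Finset.sum_mul,
    hP.rowSum, one_mul]
  have key : ∑ i, P x (flip x i) * grad g i x
      = ∑ x' : Config V, P x x' * (g x' - g x) := by
    have h3 : ∑ x' ∈ Finset.univ.image (flip x), P x x' * (g x' - g x)
        = ∑ i, P x (flip x i) * grad g i x :=
      Finset.sum_image (fun i _ i' _ h => flip_left_injective x h)
    rw [← h3]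
    refine Finset.sum_subset (Finset.subset_univ _) fun x' _ hx' => ?_
    by_cases hxx : x' = x
    · rw [hxx, sub_self, mul_zero]
    · rw [hP.singleSite x x' hxx, zero_mul]
      intro i hi
      exact hx' (Finset.mem_image.mpr ⟨i, Finset.mem_univ i, hi.symm⟩)
  rw [key]; ring

lemma sum_flip_le_one (hP : IsLocalMC G P) (x : Config V) :
    ∑ i, P x (flip x i) ≤ 1 := by
  have h3 : ∑ x' ∈ Finset.univ.image (flip x), P x x' = ∑ i, P x (flip x i) :=
    Finset.sum_image (fun i _ i' _ h => flip_left_injective x h)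
  rw [← h3]
  calc ∑ x' ∈ Finset.univ.image (flip x), P x x' ≤ ∑ x' : Config V, P x x' :=
        Finset.sum_le_sum_of_subset_of_nonneg (Finset.subset_univ _)
          (fun x' _ _ => hP.nonneg x x')
    _ = 1 := hP.rowSum x

end Aux2
section Aux3
variable {V : Type*} [Fintype V] [DecidableEq V] [Nonempty V]
variable {G : SimpleGraph V} [DecidableRel G.Adj] {P : Config V → Config V → ℝ}

lemma grad_mulVec_bound (hP : IsLocalMC G P) (g : Config V → ℝ) (j : V)
    {a c : ℝ} (ha : ∀ x, |grad g j x| ≤ a)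
    (hc : ∀ i, (i = j ∨ G.Adj i j) → ∀ x, |grad g i x| ≤ c) (hc0 : 0 ≤ c)
    (x : Config V) :
    |grad ((Matrix.of P).mulVec g) j x| ≤
      a + 2 / (Fintype.card V : ℝ) *
        ((Finset.univ.filter fun i => i = j ∨ G.Adj i j).card : ℝ) * c := by
  classical
  set n : ℝ := (Fintype.card V : ℝ) with hn
  have hn0 : 0 < n := by
    rw [hn]; exact_mod_cast Fintype.card_pos
  have ha0 : 0 ≤ a := le_trans (abs_nonneg _) (ha x)
  set S : Finset V := Finset.univ.filter (fun i => i = j ∨ G.Adj i j) with hS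
  set Sc : Finset V := Finset.univ.filter (fun i => ¬(i = j ∨ G.Adj i j)) with hSc
  -- the basic decomposition
  have hgrad : grad ((Matrix.of P).mulVec g) j x
      = grad g j x + ∑ i, (P (flip x j) (flip (flip x j) i) * grad g i (flip x j)
          - P x (flip x i) * grad g i x) := by
    have h0 : grad ((Matrix.of P).mulVec g) j x
        = (Matrix.of P).mulVec g (flip x j) - (Matrix.of P).mulVec g x := rfl
    have h1 : grad g j x = g (flip x j) - g x := rfl
    rw [h0, mulVec_rep hP g (flip x j), mulVec_rep hP g x, Finset.sum_sub_distrib, h1]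
    ring
  -- rewrite the far terms
  have hfar : ∀ i ∈ Sc,
      P (flip x j) (flip (flip x j) i) * grad g i (flip x j)
        - P x (flip x i) * grad g i x
      = P x (flip x i) * grad g j (flip x i) - P x (flip x i) * grad g j x := by
    intro i hi
    rw [hSc, Finset.mem_filter] at hi
    push_neg at hi
    obtain ⟨hij, hadj⟩ := hi.2
    have hloc : P (flip x j) (flip (flip x j) i) = P x (flip x i) := by
      refine hP.locality i (flip x j) x (flip_apply_ne x hij) ?_
      intro k hk
      refine flip_apply_ne x ?_
      intro hkj
      exact hadj (hkj ▸ hk)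
    rw [hloc]
    unfold grad
    rw [flip_comm x hij]
    ring
  have hsplit : ∑ i, (P (flip x j) (flip (flip x j) i) * grad g i (flip x j)
          - P x (flip x i) * grad g i x)
      = (∑ i ∈ S, (P (flip x j) (flip (flip x j) i) * grad g i (flip x j)
          - P x (flip x i) * grad g i x))
        + ∑ i ∈ Sc, (P x (flip x i) * grad g j (flip x i) - P x (flip x i) * grad g j x) := by
    rw [← Finset.sum_congr rfl hfar]
    exact (Finset.sum_filter_add_sum_filter_not Finset.univ _ _).symm
  set t : ℝ := ∑ i ∈ Sc, P x (flip x i) with hts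
  have ht0 : 0 ≤ t := Finset.sum_nonneg fun i _ => hP.nonneg _ _
  have ht1 : t ≤ 1 := by
    calc t ≤ ∑ i, P x (flip x i) :=
          Finset.sum_le_sum_of_subset_of_nonneg (Finset.filter_subset _ _)
            (fun i _ _ => hP.nonneg _ _)
      _ ≤ 1 := sum_flip_le_one hP x
  -- the "far" part is a convex-type combination
  have hfarbound : |grad g j x + ∑ i ∈ Sc,
      (P x (flip x i) * grad g j (flip x i) - P x (flip x i) * grad g j x)| ≤ a := by
    have hrw : grad g j x + ∑ i ∈ Sc,
        (P x (flip x i) * grad g j (flip x i) - P x (flip x i) * grad g j x)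
        = (1 - t) * grad g j x + ∑ i ∈ Sc, P x (flip x i) * grad g j (flip x i) := by
      rw [Finset.sum_sub_distrib, ← Finset.sum_mul, ← hts]
      ring
    rw [hrw]
    calc |(1 - t) * grad g j x + ∑ i ∈ Sc, P x (flip x i) * grad g j (flip x i)|
        ≤ |(1 - t) * grad g j x| + |∑ i ∈ Sc, P x (flip x i) * grad g j (flip x i)| :=
          abs_add_le _ _
      _ ≤ (1 - t) * a + ∑ i ∈ Sc, P x (flip x i) * a := by
          gcongr with i hi
          · rw [abs_mul, abs_of_nonneg (by linarith : (0:ℝ) ≤ 1 - t)]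
            exact mul_le_mul_of_nonneg_left (ha x) (by linarith)
          · calc |∑ i ∈ Sc, P x (flip x i) * grad g j (flip x i)|
                ≤ ∑ i ∈ Sc, |P x (flip x i) * grad g j (flip x i)| :=
                  Finset.abs_sum_le_sum_abs _ _
              _ ≤ ∑ i ∈ Sc, P x (flip x i) * a := by
                  refine Finset.sum_le_sum fun i _ => ?_
                  rw [abs_mul, abs_of_nonneg (hP.nonneg _ _)]
                  exact mul_le_mul_of_nonneg_left (ha _) (hP.nonneg _ _)
      _ = (1 - t) * a + t * a := by rw [← Finset.sum_mul, ← hts]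
      _ = a := by ring
  -- the "near" part
  have hnear : ∀ i ∈ S, |P (flip x j) (flip (flip x j) i) * grad g i (flip x j)
      - P x (flip x i) * grad g i x| ≤ 2 / n * c := by
    intro i hi
    rw [hS, Finset.mem_filter] at hi
    have hb1 : P (flip x j) (flip (flip x j) i) ≤ 1 / n :=
      hP.bounded _ _ (Ne.symm (flip_ne _ i))
    have hb2 : P x (flip x i) ≤ 1 / n := hP.bounded _ _ (Ne.symm (flip_ne _ i))
    calc |P (flip x j) (flip (flip x j) i) * grad g i (flip x j)
        - P x (flip x i) * grad g i x|
        ≤ |P (flip x j) (flip (flip x j) i) * grad g i (flip x j)|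
          + |P x (flip x i) * grad g i x| := abs_sub _ _
      _ ≤ 1 / n * c + 1 / n * c := by
          gcongr
          · rw [abs_mul, abs_of_nonneg (hP.nonneg _ _)]
            exact mul_le_mul (hb1) (hc i hi.2 _) (abs_nonneg _) (by positivity)
          · rw [abs_mul, abs_of_nonneg (hP.nonneg _ _)]
            exact mul_le_mul (hb2) (hc i hi.2 _) (abs_nonneg _) (by positivity)
      _ = 2 / n * c := by ring
  calc |grad ((Matrix.of P).mulVec g) j x|
      = |(grad g j x + ∑ i ∈ Sc,
            (P x (flip x i) * grad g j (flip x i) - P x (flip x i) * grad g j x))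
          + ∑ i ∈ S, (P (flip x j) (flip (flip x j) i) * grad g i (flip x j)
            - P x (flip x i) * grad g i x)| := by
        rw [hgrad, hsplit]; ring_nf
    _ ≤ |grad g j x + ∑ i ∈ Sc,
            (P x (flip x i) * grad g j (flip x i) - P x (flip x i) * grad g j x)|
          + |∑ i ∈ S, (P (flip x j) (flip (flip x j) i) * grad g i (flip x j)
            - P x (flip x i) * grad g i x)| := abs_add_le _ _
    _ ≤ a + ∑ i ∈ S, (2 / n * c) := by
        exact add_le_add hfarbound
          (le_trans (Finset.abs_sum_le_sum_abs _ _) (Finset.sum_le_sum hnear))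
    _ = a + 2 / n * (S.card : ℝ) * c := by
        rw [Finset.sum_const, nsmul_eq_mul]; ring

end Aux3
section Aux4
variable {V : Type*} [Fintype V] [DecidableEq V] [Nonempty V]
variable {G : SimpleGraph V} [DecidableRel G.Adj] {P : Config V → Config V → ℝ}

lemma LR_bound {Δ : ℕ} (hdeg : ∀ v, G.degree v ≤ Δ) (hP : IsLocalMC G P)
    {B : Finset V} {f : Config V → ℝ} (hf : SupportedOn f ↑B)
    {F : ℝ} (hF : ∀ x, |f x| ≤ F) :
    ∀ (s : ℕ) (j : V) (d : ℕ), (∀ i ∈ B, (d : ℕ∞) ≤ G.edist i j) → ∀ x : Config V,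
    |grad ((Matrix.of P ^ s).mulVec f) j x| ≤
      2 * F * (1 + 2 * ((Δ : ℝ) + 1) * Real.exp 3 / (Fintype.card V : ℝ)) ^ s
        * ((Real.exp 3)⁻¹) ^ d := by
  set n : ℝ := (Fintype.card V : ℝ) with hn
  have hn0 : 0 < n := by rw [hn]; exact_mod_cast Fintype.card_pos
  set K : ℝ := 2 * ((Δ : ℝ) + 1) * Real.exp 3 with hK
  have hK0 : 0 < K := by positivity
  set α : ℝ := 1 + K / n with hα
  have hα1 : 1 ≤ α := by
    rw [hα]; nlinarith [div_nonneg hK0.le hn0.le]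
  set γ : ℝ := (Real.exp 3)⁻¹ with hγ
  have hγ0 : 0 < γ := by positivity
  have hγ1 : γ ≤ 1 := by
    rw [hγ]
    rw [inv_le_one_iff₀]
    right
    have := Real.add_one_le_exp (3 : ℝ)
    linarith
  have hF0 : 0 ≤ F := le_trans (abs_nonneg _) (hF Classical.ofNonempty)
  intro s
  induction s with
  | zero =>
      intro j d hd x
      rw [pow_zero, Matrix.one_mulVec]
      match d with
      | 0 =>
          simp only [pow_zero, mul_one]
          calc |grad f j x| ≤ |f (flip x j)| + |f x| := abs_sub _ _
            _ ≤ F + F := add_le_add (hF _) (hF _)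
            _ = 2 * F := by ring
      | (d' + 1) =>
          have hjB : j ∉ B := by
            intro hjB
            have h1 := hd j hjB
            rw [SimpleGraph.edist_self] at h1
            have : ((d' + 1 : ℕ) : ℕ∞) = 0 := le_antisymm h1 zero_le
            exact_mod_cast this
          have : grad f j x = 0 := by
            unfold grad
            rw [hf j (by simpa using hjB) x, sub_self]
          rw [this, abs_zero]
          positivity
  | succ s ih =>
      intro j d hd x
      rw [pow_succ', ← Matrix.mulVec_mulVec]
      match d with
      | 0 =>
          have hb : ∀ y, |(Matrix.of P ^ s).mulVec f y| ≤ F := pow_mulVec_abs_le hP hF s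
          calc |grad ((Matrix.of P).mulVec ((Matrix.of P ^ s).mulVec f)) j x|
              ≤ |(Matrix.of P).mulVec ((Matrix.of P ^ s).mulVec f) (flip x j)|
                + |(Matrix.of P).mulVec ((Matrix.of P ^ s).mulVec f) x| := abs_sub _ _
            _ ≤ F + F := add_le_add (mulVec_abs_le hP hb _) (mulVec_abs_le hP hb _)
            _ = 2 * F * 1 * 1 := by ring
            _ ≤ 2 * F * α ^ (s + 1) * γ ^ 0 := by
                rw [pow_zero]
                gcongr
                · exact one_le_pow₀ hα1
      | (d' + 1) =>
          have hstep := grad_mulVec_bound (G := G) hP ((Matrix.of P ^ s).mulVec f) j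
            (a := 2 * F * α ^ s * γ ^ (d' + 1)) (c := 2 * F * α ^ s * γ ^ d')
            (fun y => ih j (d' + 1) hd y)
            (fun i hi y => by
              refine ih i d' ?_ y
              intro i' hi'
              rcases hi with rfl | hadj
              · calc ((d' : ℕ) : ℕ∞) ≤ ((d' + 1 : ℕ) : ℕ∞) := by
                      exact_mod_cast le_of_lt (Nat.lt_succ_self d')
                  _ ≤ G.edist i' i := hd i' hi'
              · have h1 : ((d' + 1 : ℕ) : ℕ∞) ≤ G.edist i' j := hd i' hi'
                have h2 : G.edist i' j ≤ G.edist i' i + 1 := by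
                  calc G.edist i' j ≤ G.edist i' i + G.edist i j :=
                        SimpleGraph.edist_triangle
                    _ = G.edist i' i + 1 := by
                        rw [SimpleGraph.edist_eq_one_iff_adj.mpr hadj]
                have h3 : ((d' : ℕ) : ℕ∞) + 1 ≤ G.edist i' i + 1 := by
                  calc ((d' : ℕ) : ℕ∞) + 1 = ((d' + 1 : ℕ) : ℕ∞) := by
                        push_cast; rfl
                    _ ≤ G.edist i' i + 1 := le_trans h1 h2
                exact (WithTop.add_le_add_iff_right (by simp : (1:ℕ∞) ≠ ⊤)).mp h3)
            (by positivity) x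
          have hcard : ((Finset.univ.filter fun i => i = j ∨ G.Adj i j).card : ℝ)
              ≤ (Δ : ℝ) + 1 := by
            have hsub : (Finset.univ.filter fun i => i = j ∨ G.Adj i j)
                ⊆ insert j (G.neighborFinset j) := by
              intro i hi
              rw [Finset.mem_filter] at hi
              rcases hi.2 with rfl | hadj
              · exact Finset.mem_insert_self _ _
              · exact Finset.mem_insert_of_mem
                  ((SimpleGraph.mem_neighborFinset G j i).mpr hadj.symm)
            have h1 : (Finset.univ.filter fun i => i = j ∨ G.Adj i j).card
                ≤ Δ + 1 := by
              calc (Finset.univ.filter fun i => i = j ∨ G.Adj i j).card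
                  ≤ (insert j (G.neighborFinset j)).card := Finset.card_le_card hsub
                _ ≤ (G.neighborFinset j).card + 1 := Finset.card_insert_le _ _
                _ ≤ Δ + 1 := by
                    have := hdeg j
                    rw [← SimpleGraph.card_neighborFinset_eq_degree] at this
                    omega
            exact_mod_cast h1
          have hγK : K * γ = 2 * ((Δ : ℝ) + 1) := by
            rw [hK, hγ]
            field_simp
          calc |grad ((Matrix.of P).mulVec ((Matrix.of P ^ s).mulVec f)) j x|
              ≤ 2 * F * α ^ s * γ ^ (d' + 1) + 2 / n *
                ((Finset.univ.filter fun i => i = j ∨ G.Adj i j).card : ℝ)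
                * (2 * F * α ^ s * γ ^ d') := hstep
            _ ≤ 2 * F * α ^ s * γ ^ (d' + 1) + 2 / n * ((Δ : ℝ) + 1)
                * (2 * F * α ^ s * γ ^ d') := by gcongr
            _ = 2 * F * α ^ s * γ ^ d' * (γ + 2 * ((Δ : ℝ) + 1) / n) := by
                rw [pow_succ]
                ring
            _ = 2 * F * α ^ s * γ ^ d' * (α * γ) := by
                rw [hα]
                rw [show (1 + K / n) * γ = γ + K * γ / n by ring, hγK]
            _ = 2 * F * α ^ (s + 1) * γ ^ (d' + 1) := by
                rw [pow_succ, pow_succ]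
                ring
end Aux4
section Aux5
variable {V : Type*} [Fintype V] [DecidableEq V]

lemma grad_path_bound (g : Config V → ℝ) (Wb : V → ℝ) (hW0 : ∀ j, 0 ≤ Wb j) :
    ∀ (D : Finset V), (∀ j ∈ D, ∀ x, |grad g j x| ≤ Wb j) →
    ∀ x y : Config V, (∀ j, x j ≠ y j → j ∈ D) → |g x - g y| ≤ ∑ j ∈ D, Wb j := by
  intro D
  induction D using Finset.induction_on with
  | empty =>
      intro _ x y hxy
      have hxy2 : x = y := by
        funext j
        by_contra hne
        simpa using hxy j hne
      rw [hxy2, sub_self, abs_zero]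
      simp
  | @insert a D ha ih =>
      intro hWb x y hxy
      set x' : Config V := if x a = y a then x else flip x a with hx'
      have h1 : |g x - g x'| ≤ Wb a := by
        by_cases h : x a = y a
        · rw [hx', if_pos h, sub_self, abs_zero]; exact hW0 a
        · rw [hx', if_neg h, abs_sub_comm]
          exact hWb a (Finset.mem_insert_self a _) x
      have h2 : ∀ j, x' j ≠ y j → j ∈ D := by
        intro j hj
        by_cases hja : j = a
        · subst hja
          exfalso
          apply hj
          by_cases h : x j = y j
          · rw [hx', if_pos h]; exact h
          · rw [hx', if_neg h, flip_apply_self]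
            revert h
            cases x j <;> cases y j <;> simp
        · have hxj : x' j = x j := by
            by_cases h : x a = y a
            · rw [hx', if_pos h]
            · rw [hx', if_neg h]; exact flip_apply_ne x hja
          rw [hxj] at hj
          exact (Finset.mem_insert.mp (hxy j hj)).resolve_left hja
      calc |g x - g y| = |(g x - g x') + (g x' - g y)| := by ring_nf
        _ ≤ |g x - g x'| + |g x' - g y| := abs_add_le _ _
        _ ≤ Wb a + ∑ j ∈ D, Wb j :=
            add_le_add h1 (ih (fun j hj => hWb j (Finset.mem_insert_of_mem hj)) x' y h2)
        _ = ∑ j ∈ insert a D, Wb j := (Finset.sum_insert ha).symm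

lemma lexp_sub {A : Finset V} (ν : SubConfig A → ℝ) (u v : Config V → ℝ) :
    lexp ν u - lexp ν v = lexp ν (u - v) := by
  unfold lexp
  rw [← Finset.sum_sub_distrib]
  refine Finset.sum_congr rfl fun y _ => ?_
  simp only [Pi.sub_apply]
  ring

lemma lexp_add {A : Finset V} (ν : SubConfig A → ℝ) (u v : Config V → ℝ) :
    lexp ν (u + v) = lexp ν u + lexp ν v := by
  unfold lexp
  rw [← Finset.sum_add_distrib]
  refine Finset.sum_congr rfl fun y _ => ?_
  simp only [Pi.add_apply]
  ring

lemma abs_lexp_le {A : Finset V} {ν : SubConfig A → ℝ} (hν : IsDist ν)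
    {w : Config V → ℝ} {C : ℝ} (hC : ∀ x, |w x| ≤ C) : |lexp ν w| ≤ C := by
  unfold lexp
  calc |∑ y, ν y * w (extendC A y)| ≤ ∑ y, |ν y * w (extendC A y)| :=
        Finset.abs_sum_le_sum_abs _ _
    _ ≤ ∑ y, ν y * C := by
        refine Finset.sum_le_sum fun y _ => ?_
        rw [abs_mul, abs_of_nonneg (hν.1 y)]
        exact mul_le_mul_of_nonneg_left (hC _) (hν.1 y)
    _ = C := by rw [← Finset.sum_mul, hν.2, one_mul]

lemma supportedOn_trunc (Λ : Finset V) (g : Config V → ℝ) :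
    SupportedOn (fun x => g (extendC Λ (restrict Λ x))) ↑Λ := by
  intro i hi x
  have : restrict Λ (flip x i) = restrict Λ x := by
    funext j
    exact flip_apply_ne x (fun h => hi (by rw [← h] at hi ⊢; exact j.2))
  simp only [this]

lemma trunc_err (Λ : Finset V) (g : Config V → ℝ) (Wb : V → ℝ) (hW0 : ∀ j, 0 ≤ Wb j)
    (hWb : ∀ j ∉ Λ, ∀ x, |grad g j x| ≤ Wb j) (x : Config V) :
    |g x - g (extendC Λ (restrict Λ x))| ≤ ∑ j ∈ Λᶜ, Wb j := by
  refine grad_path_bound g Wb hW0 Λᶜ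
    (fun j hj => hWb j (by simpa using hj)) x _ ?_
  intro j hj
  rw [Finset.mem_compl]
  intro hjΛ
  apply hj
  simp [extendC, restrict, hjΛ]

end Aux5
section Aux6
variable {V : Type*} [Fintype V] [DecidableEq V]
variable {G : SimpleGraph V} [DecidableRel G.Adj] {P : Config V → Config V → ℝ}

lemma lexp_telescope (hP : IsLocalMC G P)
    {Λ : Finset V} {ν : SubConfig (closure G Λ) → ℝ} (hν : ν ∈ LPmc G P Λ)
    (f : Config V → ℝ) (T : ℕ) (E : ℕ → ℝ)
    (hE : ∀ s, s < T → ∀ x : Config V, |(Matrix.of P ^ s).mulVec f x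
        - (Matrix.of P ^ s).mulVec f (extendC Λ (restrict Λ x))| ≤ E s) :
    |lexp ν ((Matrix.of P ^ T).mulVec f) - lexp ν f|
      ≤ ∑ s ∈ Finset.range T, 2 * E s := by
  obtain ⟨hνd, hνs⟩ := hν
  have hstep : ∀ s, s < T →
      |lexp ν ((Matrix.of P ^ (s+1)).mulVec f) - lexp ν ((Matrix.of P ^ s).mulVec f)|
        ≤ 2 * E s := by
    intro s hs
    set g : Config V → ℝ := (Matrix.of P ^ s).mulVec f with hg
    set h : Config V → ℝ := fun x => g (extendC Λ (restrict Λ x)) with hh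
    set e : Config V → ℝ := fun x => g x - g (extendC Λ (restrict Λ x)) with he
    have hge : g = e + h := by funext x; simp [he, hh]
    have h1 : (Matrix.of P ^ (s+1)).mulVec f = (Matrix.of P).mulVec g := by
      rw [hg, pow_succ', ← Matrix.mulVec_mulVec]
    have h2 : lexp ν ((Matrix.of P).mulVec g)
        = lexp ν ((Matrix.of P).mulVec e) + lexp ν h := by
      rw [hge, Matrix.mulVec_add, lexp_add, hνs h (supportedOn_trunc Λ g)]
    have h3 : lexp ν g = lexp ν e + lexp ν h := by
      rw [hge]; exact lexp_add ν e h
    rw [h1, h2, h3]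
    have hEe : ∀ x, |e x| ≤ E s := hE s hs
    calc |lexp ν ((Matrix.of P).mulVec e) + lexp ν h - (lexp ν e + lexp ν h)|
        = |lexp ν ((Matrix.of P).mulVec e) - lexp ν e| := by ring_nf
      _ ≤ |lexp ν ((Matrix.of P).mulVec e)| + |lexp ν e| := abs_sub _ _
      _ ≤ E s + E s := add_le_add
          (abs_lexp_le hνd (mulVec_abs_le hP hEe))
          (abs_lexp_le hνd hEe)
      _ = 2 * E s := by ring
  have htel : lexp ν ((Matrix.of P ^ T).mulVec f) - lexp ν f
      = ∑ s ∈ Finset.range T,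
          (lexp ν ((Matrix.of P ^ (s+1)).mulVec f) - lexp ν ((Matrix.of P ^ s).mulVec f)) := by
    rw [Finset.sum_range_sub (fun s => lexp ν ((Matrix.of P ^ s).mulVec f)) T]
    rw [pow_zero, Matrix.one_mulVec]
  rw [htel]
  calc |∑ s ∈ Finset.range T, (lexp ν ((Matrix.of P ^ (s+1)).mulVec f)
          - lexp ν ((Matrix.of P ^ s).mulVec f))|
      ≤ ∑ s ∈ Finset.range T, |lexp ν ((Matrix.of P ^ (s+1)).mulVec f)
          - lexp ν ((Matrix.of P ^ s).mulVec f)| := Finset.abs_sum_le_sum_abs _ _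
    _ ≤ ∑ s ∈ Finset.range T, 2 * E s :=
        Finset.sum_le_sum fun s hs => hstep s (Finset.mem_range.mp hs)

lemma isDist_push {A : Finset V} {ν : SubConfig A → ℝ} (hν : IsDist ν) :
    IsDist (fun x : Config V => ∑ y, if extendC A y = x then ν y else 0) := by
  constructor
  · intro x
    refine Finset.sum_nonneg fun y _ => ?_
    by_cases h : extendC A y = x
    · rw [if_pos h]; exact hν.1 y
    · rw [if_neg h]
  · rw [Finset.sum_comm]
    calc ∑ y : SubConfig A, ∑ x : Config V, (if extendC A y = x then ν y else 0)
        = ∑ y : SubConfig A, ν y := by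
          refine Finset.sum_congr rfl fun y _ => ?_
          rw [Finset.sum_ite_eq Finset.univ (extendC A y) (fun _ => ν y)]
          simp
      _ = 1 := hν.2

lemma lexp_mulVec_push (Λ : Finset V) (ν : SubConfig (closure G Λ) → ℝ)
    (f : Config V → ℝ) (M : Matrix (Config V) (Config V) ℝ) :
    lexp ν (M.mulVec f)
      = ∑ x' : Config V, (∑ x : Config V,
          (∑ y, if extendC (closure G Λ) y = x then ν y else 0) * M x x') * f x' := by
  have h1 : ∀ x' : Config V, (∑ x : Config V,
      (∑ y, if extendC (closure G Λ) y = x then ν y else 0) * M x x')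
      = ∑ y, ν y * M (extendC (closure G Λ) y) x' := by
    intro x'
    simp only [Finset.sum_mul]
    rw [Finset.sum_comm]
    refine Finset.sum_congr rfl fun y _ => ?_
    simp only [ite_mul, zero_mul]
    rw [Finset.sum_ite_eq Finset.univ (extendC (closure G Λ) y)
      (fun x => ν y * M x x')]
    simp
  unfold lexp
  simp only [Matrix.mulVec, dotProduct]
  simp only [Finset.mul_sum]
  rw [Finset.sum_comm]
  refine Finset.sum_congr rfl fun x' _ => ?_
  rw [h1 x', Finset.sum_mul]
  exact Finset.sum_congr rfl fun y _ => by ring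

end Aux6
section Aux7

set_option maxHeartbeats 1000000

lemma num_term1 {K n F : ℝ} (r T : ℕ)
    (hK1 : 1 ≤ K) (hn1 : 1 ≤ n) (hF0 : 0 ≤ F) (hr1 : 1 ≤ (r:ℝ))
    (hT2 : (T:ℝ) ≤ n * r / K + 1) :
    2 * (T:ℝ) * n * (2 * F * (1 + K / n) ^ T * ((Real.exp 3)⁻¹) ^ r)
      ≤ 8 * Real.exp K * n ^ 2 * F * Real.exp (-(r:ℝ)) := by
  have hn0 : (0:ℝ) < n := lt_of_lt_of_le one_pos hn1
  have hK0 : (0:ℝ) < K := lt_of_lt_of_le one_pos hK1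
  have hr0' : (0:ℝ) ≤ (r:ℝ) := by linarith
  set u : ℝ := Real.exp (-(r:ℝ)) with hudef
  have hu0 : 0 < u := Real.exp_pos _
  have hexpru : Real.exp (r:ℝ) * u = 1 := by
    rw [hudef, ← Real.exp_add]; simp
  have hru : (r:ℝ) * u ≤ 1 := by
    have h1 : (r:ℝ) ≤ Real.exp (r:ℝ) := by
      have := Real.add_one_le_exp (r:ℝ); linarith
    calc (r:ℝ) * u ≤ Real.exp (r:ℝ) * u := mul_le_mul_of_nonneg_right h1 hu0.le
      _ = 1 := hexpru
  have hγr : ((Real.exp 3)⁻¹) ^ r = u ^ 3 := by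
    rw [hudef, ← Real.exp_neg, ← Real.exp_nat_mul, ← Real.exp_nat_mul]
    norm_num
    ring_nf
  have hαT : (1 + K / n) ^ T ≤ Real.exp K * Real.exp (r:ℝ) := by
    have h1 : 1 + K / n ≤ Real.exp (K / n) := by
      have := Real.add_one_le_exp (K / n); linarith
    have h0 : (0:ℝ) ≤ 1 + K / n := by positivity
    calc (1 + K / n) ^ T ≤ (Real.exp (K / n)) ^ T := pow_le_pow_left₀ h0 h1 T
      _ = Real.exp ((T:ℝ) * (K / n)) := (Real.exp_nat_mul _ T).symm
      _ ≤ Real.exp (K + (r:ℝ)) := by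
          rw [Real.exp_le_exp]
          have h2 : (T:ℝ) * (K / n) ≤ (n * r / K + 1) * (K / n) :=
            mul_le_mul_of_nonneg_right hT2 (by positivity)
          have h3 : (n * r / K + 1) * (K / n) = (r:ℝ) + K / n := by
            field_simp
          have h4 : K / n ≤ K := by
            rw [div_le_iff₀ hn0]; nlinarith
          linarith
      _ = Real.exp K * Real.exp (r:ℝ) := Real.exp_add _ _
  have hT3 : (T:ℝ) ≤ 2 * n * r := by
    have h1 : n * r / K ≤ n * r := by
      rw [div_le_iff₀ hK0]
      have h2 : (n * ↑r) * 1 ≤ (n * ↑r) * K :=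
        mul_le_mul_of_nonneg_left hK1 (mul_nonneg hn0.le hr0')
      linarith
    have hnr1 : (1:ℝ) ≤ n * r := by
      have h3 : (1:ℝ) * 1 ≤ n * r := mul_le_mul hn1 hr1 zero_le_one hn0.le
      linarith
    linarith
  rw [hγr]
  have hTnn : (0:ℝ) ≤ (T:ℝ) := Nat.cast_nonneg T
  have hF2 : (0:ℝ) ≤ 2 * F := by linarith
  have hb2 : 2 * F * (1 + K / n) ^ T * u ^ 3
      ≤ 2 * F * (Real.exp K * Real.exp (r:ℝ)) * u ^ 3 :=
    mul_le_mul_of_nonneg_right (mul_le_mul_of_nonneg_left hαT hF2)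
      (pow_nonneg hu0.le 3)
  have hfac : 2 * (T:ℝ) * n ≤ 2 * (2 * n * r) * n := by
    have h5 : (T:ℝ) * n ≤ (2 * n * r) * n := mul_le_mul_of_nonneg_right hT3 hn0.le
    linarith
  calc 2 * (T:ℝ) * n * (2 * F * (1 + K / n) ^ T * u ^ 3)
      ≤ 2 * (T:ℝ) * n * (2 * F * (Real.exp K * Real.exp (r:ℝ)) * u ^ 3) :=
        mul_le_mul_of_nonneg_left hb2 (by positivity : (0:ℝ) ≤ 2 * (T:ℝ) * n)
    _ ≤ 2 * (2 * n * r) * n * (2 * F * (Real.exp K * Real.exp (r:ℝ)) * u ^ 3) := by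
        refine mul_le_mul_of_nonneg_right hfac ?_
        have h6 : (0:ℝ) ≤ Real.exp K * Real.exp (r:ℝ) := by positivity
        have h7 : (0:ℝ) ≤ u ^ 3 := by positivity
        exact mul_nonneg (mul_nonneg hF2 h6) h7
    _ = (8 * Real.exp K * n ^ 2 * F * ((r:ℝ) * u * u)) * (Real.exp (r:ℝ) * u) := by
        ring
    _ = 8 * Real.exp K * n ^ 2 * F * ((r:ℝ) * u * u) := by
        rw [hexpru, mul_one]
    _ ≤ 8 * Real.exp K * n ^ 2 * F * u := by
        have h1 : (r:ℝ) * u * u ≤ u := by nlinarith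
        have h2 : (0:ℝ) ≤ 8 * Real.exp K * n ^ 2 := by positivity
        have h3 : (0:ℝ) ≤ 8 * Real.exp K * n ^ 2 * F := mul_nonneg h2 hF0
        nlinarith

lemma num_term2 {K n F c₁ c₂ : ℝ} (r T : ℕ)
    (hK0 : 0 < K) (hn0 : 0 < n) (hF0 : 0 ≤ F) (hc₁ : 0 < c₁) (hc₂ : 0 < c₂)
    (hdgn : 0 ≤ 1 - c₂ / n) (hT1 : n * r / K ≤ (T:ℝ)) :
    c₁ * n * (1 - c₂ / n) ^ T * F ≤ c₁ * n * F * Real.exp (-(c₂ / K) * r) := by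
  have h1 : (1 - c₂ / n) ≤ Real.exp (-(c₂ / n)) := by
    have := Real.add_one_le_exp (-(c₂ / n)); linarith
  have h2 : (1 - c₂ / n) ^ T ≤ Real.exp (-(c₂ / K) * r) := by
    calc (1 - c₂ / n) ^ T ≤ (Real.exp (-(c₂ / n))) ^ T := pow_le_pow_left₀ hdgn h1 T
      _ = Real.exp ((T:ℝ) * (-(c₂ / n))) := (Real.exp_nat_mul _ T).symm
      _ ≤ Real.exp (-(c₂ / K) * r) := by
          rw [Real.exp_le_exp]
          have h3 : n * r / K * (c₂ / n) ≤ (T:ℝ) * (c₂ / n) :=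
            mul_le_mul_of_nonneg_right hT1 (by positivity)
          have h4 : n * r / K * (c₂ / n) = c₂ / K * r := by
            field_simp
          nlinarith
  have h5 : (0:ℝ) ≤ c₁ * n := (mul_pos hc₁ hn0).le
  have h6 : c₁ * n * (1 - c₂ / n) ^ T ≤ c₁ * n * Real.exp (-(c₂ / K) * r) :=
    mul_le_mul_of_nonneg_left h2 h5
  calc c₁ * n * (1 - c₂ / n) ^ T * F ≤ c₁ * n * Real.exp (-(c₂ / K) * r) * F :=
        mul_le_mul_of_nonneg_right h6 hF0
    _ = c₁ * n * F * Real.exp (-(c₂ / K) * r) := by ring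

lemma num_final {K n F c₁ c₂ X : ℝ} (r : ℕ)
    (hc₁ : 0 < c₁) (hc₂ : 0 < c₂) (hK0 : 0 < K) (hn1 : 1 ≤ n) (hF0 : 0 ≤ F)
    (hX2F : X ≤ 2 * F)
    (hXE : X ≤ 2 * (8 * Real.exp K * n ^ 2 * F * Real.exp (-(r:ℝ))
      + c₁ * n * F * Real.exp (-(c₂ / K) * r))) :
    X ≤ (16 * Real.exp K + 2 * c₁ + 2) * n * F
      * Real.exp (-(min (1/2) (c₂ / K)) * r) := by
  have hn0 : (0:ℝ) < n := lt_of_lt_of_le one_pos hn1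
  have hr0' : (0:ℝ) ≤ (r:ℝ) := Nat.cast_nonneg r
  set C₂ : ℝ := min (1/2) (c₂ / K) with hC2def
  have hC20 : 0 < C₂ := lt_min (by norm_num) (by positivity)
  have hC2half : C₂ ≤ 1/2 := min_le_left _ _
  have hC2K : C₂ ≤ c₂ / K := min_le_right _ _
  have hexpK : (0:ℝ) < Real.exp K := Real.exp_pos K
  have hec2 : (0:ℝ) < Real.exp (-C₂ * r) := Real.exp_pos _
  have he1 : Real.exp (-(1/2) * (r:ℝ)) ≤ Real.exp (-C₂ * r) := by
    rw [Real.exp_le_exp]; nlinarith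
  have he2 : Real.exp (-(c₂ / K) * (r:ℝ)) ≤ Real.exp (-C₂ * r) := by
    rw [Real.exp_le_exp]
    have : C₂ * r ≤ c₂ / K * r := mul_le_mul_of_nonneg_right hC2K hr0'
    linarith
  by_cases hcase : n ≤ Real.exp ((1/2) * (r:ℝ))
  · have hu0 : (0:ℝ) < Real.exp (-(r:ℝ)) := Real.exp_pos _
    have hnu : n * Real.exp (-(r:ℝ)) ≤ Real.exp (-(1/2) * (r:ℝ)) := by
      calc n * Real.exp (-(r:ℝ)) ≤ Real.exp ((1/2) * (r:ℝ)) * Real.exp (-(r:ℝ)) :=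
            mul_le_mul_of_nonneg_right hcase hu0.le
        _ = Real.exp (-(1/2) * (r:ℝ)) := by
            rw [← Real.exp_add]; congr 1; ring
    have hnu2 : n * Real.exp (-(r:ℝ)) ≤ Real.exp (-C₂ * r) := le_trans hnu he1
    have hD1b : 2 * (8 * Real.exp K * n ^ 2 * F * Real.exp (-(r:ℝ)))
        ≤ 16 * Real.exp K * n * F * Real.exp (-C₂ * r) := by
      have h1 : 2 * (8 * Real.exp K * n ^ 2 * F * Real.exp (-(r:ℝ)))
          = 16 * Real.exp K * n * F * (n * Real.exp (-(r:ℝ))) := by ring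
      rw [h1]
      refine mul_le_mul_of_nonneg_left hnu2 ?_
      positivity
    have hD2b : 2 * (c₁ * n * F * Real.exp (-(c₂ / K) * r))
        ≤ 2 * c₁ * n * F * Real.exp (-C₂ * r) := by
      have h1 : 2 * (c₁ * n * F * Real.exp (-(c₂ / K) * r))
          = 2 * c₁ * n * F * Real.exp (-(c₂ / K) * r) := by ring
      rw [h1]
      refine mul_le_mul_of_nonneg_left he2 ?_
      positivity
    have hrest : (0:ℝ) ≤ 2 * n * F * Real.exp (-C₂ * r) := by positivity
    have hsum : (16 * Real.exp K + 2 * c₁ + 2) * n * F * Real.exp (-C₂ * r)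
        = 16 * Real.exp K * n * F * Real.exp (-C₂ * r)
          + 2 * c₁ * n * F * Real.exp (-C₂ * r)
          + 2 * n * F * Real.exp (-C₂ * r) := by ring
    linarith
  · push_neg at hcase
    have h2 : (1:ℝ) < n * Real.exp (-(1/2) * (r:ℝ)) := by
      have h3 : Real.exp ((1/2) * (r:ℝ)) * Real.exp (-(1/2) * (r:ℝ)) = 1 := by
        rw [← Real.exp_add]; simp
      have h4 : 0 < Real.exp (-(1/2) * (r:ℝ)) := Real.exp_pos _
      calc (1:ℝ) = Real.exp ((1/2) * (r:ℝ)) * Real.exp (-(1/2) * (r:ℝ)) := h3.symm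
        _ < n * Real.exp (-(1/2) * (r:ℝ)) := by
            exact mul_lt_mul_of_pos_right hcase h4
    have h5 : n * Real.exp (-(1/2) * (r:ℝ)) ≤ n * Real.exp (-C₂ * r) :=
      mul_le_mul_of_nonneg_left he1 hn0.le
    have h6 : (1:ℝ) ≤ n * Real.exp (-C₂ * r) := by linarith
    have h7 : 2 * F ≤ 2 * F * (n * Real.exp (-C₂ * r)) := by nlinarith
    have h8 : (0:ℝ) ≤ (16 * Real.exp K + 2 * c₁) * n * F * Real.exp (-C₂ * r) := by
      positivity
    have h9 : (16 * Real.exp K + 2 * c₁ + 2) * n * F * Real.exp (-C₂ * r)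
        = (16 * Real.exp K + 2 * c₁) * n * F * Real.exp (-C₂ * r)
          + 2 * F * (n * Real.exp (-C₂ * r)) := by ring
    linarith

end Aux7

set_option maxHeartbeats 1000000 in
/-- **convergence of the Markov-chain LP hierarchy.** For all `Δ > 1`,
`b ≥ 1`, `c₁, c₂ > 0` there are constants `C₁, C₂ > 0` (depending only on `Δ, b, c₁, c₂`)
such that: for any spin system on a graph `G` on `n` vertices of maximum degree `≤ Δ` with
Gibbs distribution `μ`, and any local Markov chain `P` with
`sup_{ν₀} ‖ν₀ P^t - μ‖₁ ≤ c₁ n (1 - c₂/n)^t`, for every `f` supported on `B` with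
`|B| ≤ b` and every `Λ ⊇ B`,
`max LP_{Λ,MC}(f) - min LP_{Λ,MC}(f) ≤ C₁ n ‖f‖_∞ e^{-C₂ dist(B,Λᶜ)}`. -/
theorem LPmc_convergence (Δ b : ℕ) (hΔ : 1 < Δ) (hb : 1 ≤ b)
    (c₁ c₂ : ℝ) (hc₁ : 0 < c₁) (hc₂ : 0 < c₂) :
    ∃ C₁ C₂ : ℝ, 0 < C₁ ∧ 0 < C₂ ∧
      ∀ (V : Type) (_ : Fintype V) (_ : DecidableEq V) (_ : Nonempty V)
        (G : SimpleGraph V) (_ : DecidableRel G.Adj),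
        (∀ v : V, G.degree v ≤ Δ) →
        ∀ β : ℝ, 0 ≤ β → ∀ h : V → V → Bool → Bool → ℝ,
        (∀ i j a b', h i j a b' = h i j b' a) → (∀ i j, h i j = h j i) →
        ∀ P : Config V → Config V → ℝ, IsLocalMC G P →
        (∀ (t : ℕ) (ν₀ : Config V → ℝ), IsDist ν₀ →
          ∑ x' : Config V,
              |(∑ x : Config V, ν₀ x * (Matrix.of P ^ t) x x') - gibbs (ham G β h) x'| ≤
            c₁ * (Fintype.card V : ℝ) * (1 - c₂ / (Fintype.card V : ℝ)) ^ t) →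
        ∀ B Λ : Finset V, B ⊆ Λ → B.card ≤ b →
        ∀ f : Config V → ℝ, SupportedOn f ↑B →
        ∀ r : ℕ, (∀ i ∈ B, ∀ j ∉ Λ, (r : ℕ∞) ≤ G.edist i j) →
        sSup (mcVals G P Λ f) - sInf (mcVals G P Λ f) ≤
          C₁ * (Fintype.card V : ℝ) * supNorm f * Real.exp (-C₂ * r) := by
  have hexp3 : (1:ℝ) ≤ Real.exp 3 := by
    have := Real.add_one_le_exp (3:ℝ); linarith
  set K : ℝ := 2 * ((Δ : ℕ) + 1 : ℝ) * Real.exp 3 with hKdef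
  have hΔ0 : (0:ℝ) ≤ (Δ : ℝ) := Nat.cast_nonneg Δ
  have hK1 : 1 ≤ K := by
    rw [hKdef]; nlinarith
  have hK0 : 0 < K := lt_of_lt_of_le one_pos hK1
  have hexpK : (0:ℝ) < Real.exp K := Real.exp_pos K
  refine ⟨16 * Real.exp K + 2 * c₁ + 2, min (1/2) (c₂ / K), by nlinarith, ?_, ?_⟩
  · exact lt_min (by norm_num) (by positivity)
  intro V iV iV2 iV3 G iG hdeg β hβ h hsym1 hsym2 P hP hmix B Λ hBΛ hBcard f hf r hr
  set n : ℝ := (Fintype.card V : ℝ) with hn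
  have hn1 : (1:ℝ) ≤ n := by
    rw [hn]; exact_mod_cast Fintype.card_pos
  have hn0 : (0:ℝ) < n := lt_of_lt_of_le one_pos hn1
  set F : ℝ := supNorm f with hFdef
  have hFx : ∀ x, |f x| ≤ F := fun x => abs_le_supNorm f x
  have hF0 : 0 ≤ F := supNorm_nonneg f
  set C₂ : ℝ := min (1/2) (c₂ / K) with hC2def
  have hC20 : 0 < C₂ := lt_min (by norm_num) (by positivity)
  have hC2half : C₂ ≤ 1/2 := min_le_left _ _
  have hC2K : C₂ ≤ c₂ / K := min_le_right _ _
  have hr0' : (0:ℝ) ≤ (r:ℝ) := Nat.cast_nonneg r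
  have hC10 : (0:ℝ) ≤ 16 * Real.exp K + 2 * c₁ + 2 := by nlinarith
  have hRHS0 : 0 ≤ (16 * Real.exp K + 2 * c₁ + 2) * n * F * Real.exp (-C₂ * r) :=
    mul_nonneg (mul_nonneg (mul_nonneg hC10 hn0.le) hF0) (Real.exp_pos _).le
  -- empty case
  by_cases hne : (mcVals G P Λ f).Nonempty
  case neg =>
    rw [Set.not_nonempty_iff_eq_empty] at hne
    rw [hne, Real.sSup_empty, Real.sInf_empty, sub_zero]
    exact hRHS0
  -- trivial bound on LP values
  have hvF : ∀ v ∈ mcVals G P Λ f, |v| ≤ F := by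
    rintro v ⟨ν, hν, rfl⟩
    exact abs_lexp_le hν.1 hFx
  have hXtriv : sSup (mcVals G P Λ f) - sInf (mcVals G P Λ f) ≤ 2 * F := by
    have h1 : sSup (mcVals G P Λ f) ≤ F :=
      csSup_le hne fun v hv => (abs_le.mp (hvF v hv)).2
    have h2 : -F ≤ sInf (mcVals G P Λ f) :=
      le_csInf hne fun v hv => (abs_le.mp (hvF v hv)).1
    linarith
  -- degenerate mixing case
  by_cases hdgn : 1 - c₂ / n < 0
  case pos =>
    exfalso
    have hδ : IsDist (fun x : Config V => if x = (fun _ => true) then (1:ℝ) else 0) := by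
      constructor
      · intro x; by_cases hx : x = (fun _ => true) <;> simp [hx]
      · rw [Finset.sum_ite_eq' Finset.univ (fun _ => true) (fun _ => (1:ℝ))]
        simp
    have hmix1 := hmix 1 _ hδ
    have h0 : (0:ℝ) ≤ ∑ x' : Config V,
        |(∑ x : Config V, (if x = (fun _ => true) then (1:ℝ) else 0) * (Matrix.of P ^ 1) x x')
          - gibbs (ham G β h) x'| :=
      Finset.sum_nonneg fun _ _ => abs_nonneg _
    have hneg : c₁ * n * (1 - c₂ / n) ^ 1 < 0 := by
      rw [pow_one]
      exact mul_neg_of_pos_of_neg (mul_pos hc₁ hn0) hdgn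
    linarith
  push_neg at hdgn
  -- r = 0 case
  rcases Nat.eq_zero_or_pos r with hr0 | hrpos
  · rw [hr0]
    simp only [Nat.cast_zero, mul_zero, Real.exp_zero, mul_one]
    have hC12 : (2:ℝ) ≤ 16 * Real.exp K + 2 * c₁ + 2 := by nlinarith
    have hstep : 2 * F ≤ (16 * Real.exp K + 2 * c₁ + 2) * n * F := by
      calc 2 * F ≤ 2 * (n * F) := by
            nlinarith [mul_nonneg (sub_nonneg.mpr hn1) hF0]
        _ ≤ (16 * Real.exp K + 2 * c₁ + 2) * (n * F) :=
            mul_le_mul_of_nonneg_right hC12 (mul_nonneg hn0.le hF0)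
        _ = (16 * Real.exp K + 2 * c₁ + 2) * n * F := by ring
    linarith
  -- main case: r ≥ 1
  have hr1 : (1:ℝ) ≤ (r:ℝ) := by exact_mod_cast hrpos
  set T : ℕ := ⌈n * r / K⌉₊ with hTdef
  have hT1 : n * r / K ≤ (T:ℝ) := Nat.le_ceil _
  have hT2 : (T:ℝ) ≤ n * r / K + 1 := le_of_lt (Nat.ceil_lt_add_one (by positivity))
  set α : ℝ := 1 + K / n with hαdef
  have hα1 : 1 ≤ α := by
    rw [hαdef]; nlinarith [div_nonneg hK0.le hn0.le]
  have hα0 : 0 ≤ α := le_trans zero_le_one hα1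
  set γ : ℝ := (Real.exp 3)⁻¹ with hγdef
  have hγ0 : 0 < γ := by rw [hγdef]; positivity
  -- Lieb-Robinson bound outside Λ
  have hLR : ∀ (s : ℕ), ∀ j ∉ Λ, ∀ x : Config V,
      |grad ((Matrix.of P ^ s).mulVec f) j x| ≤ 2 * F * α ^ s * γ ^ r := by
    intro s j hj x
    exact LR_bound hdeg hP hf hFx s j r (fun i hi => hr i hi j hj) x
  -- truncation error bound
  have hE : ∀ s, s < T → ∀ x : Config V, |(Matrix.of P ^ s).mulVec f x
      - (Matrix.of P ^ s).mulVec f (extendC Λ (restrict Λ x))|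
      ≤ n * (2 * F * α ^ T * γ ^ r) := by
    intro s hs x
    calc |(Matrix.of P ^ s).mulVec f x
        - (Matrix.of P ^ s).mulVec f (extendC Λ (restrict Λ x))|
        ≤ ∑ _j ∈ Λᶜ, (2 * F * α ^ s * γ ^ r) :=
          trunc_err Λ ((Matrix.of P ^ s).mulVec f) (fun _ => 2 * F * α ^ s * γ ^ r)
            (fun _ => by positivity) (fun j hj y => hLR s j hj y) x
      _ = ((Λᶜ.card : ℕ) : ℝ) * (2 * F * α ^ s * γ ^ r) := by
          rw [Finset.sum_const, nsmul_eq_mul]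
      _ ≤ n * (2 * F * α ^ T * γ ^ r) := by
          have hc1 : ((Λᶜ.card : ℕ) : ℝ) ≤ n := by
            rw [hn]; exact_mod_cast Finset.card_le_univ _
          have hc2 : α ^ s ≤ α ^ T := pow_le_pow_right₀ hα1 (le_of_lt hs)
          have h1 : (0:ℝ) ≤ 2 * F * α ^ s * γ ^ r := by positivity
          have h2 : 2 * F * α ^ s * γ ^ r ≤ 2 * F * α ^ T * γ ^ r := by gcongr
          nlinarith [pow_nonneg hγ0.le r, pow_nonneg hα0 T]
  -- the Gibbs expectation
  set μf : ℝ := ∑ x' : Config V, gibbs (ham G β h) x' * f x' with hμfdef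
  -- key bound for every feasible value
  have hkey : ∀ v ∈ mcVals G P Λ f,
      |v - μf| ≤ 2 * (T:ℝ) * n * (2 * F * α ^ T * γ ^ r)
        + c₁ * n * (1 - c₂ / n) ^ T * F := by
    rintro v ⟨ν, hν, rfl⟩
    have hA := lexp_telescope hP hν f T (fun _ => n * (2 * F * α ^ T * γ ^ r)) hE
    rw [Finset.sum_const, Finset.card_range, nsmul_eq_mul] at hA
    set ν₀ : Config V → ℝ :=
      fun x => ∑ y, if extendC (closure G Λ) y = x then ν y else 0 with hν₀def
    have hid : lexp ν ((Matrix.of P ^ T).mulVec f)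
        = ∑ x' : Config V, (∑ x : Config V, ν₀ x * (Matrix.of P ^ T) x x') * f x' :=
      lexp_mulVec_push Λ ν f (Matrix.of P ^ T)
    have hmixT := hmix T ν₀ (isDist_push hν.1)
    have hB : |lexp ν ((Matrix.of P ^ T).mulVec f) - μf|
        ≤ c₁ * n * (1 - c₂ / n) ^ T * F := by
      have hgather : (∑ x' : Config V, (∑ x : Config V, ν₀ x * (Matrix.of P ^ T) x x') * f x') - μf
          = ∑ x' : Config V, ((∑ x : Config V, ν₀ x * (Matrix.of P ^ T) x x')
              - gibbs (ham G β h) x') * f x' := by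
        rw [hμfdef, ← Finset.sum_sub_distrib]
        exact Finset.sum_congr rfl fun x' _ => by ring
      rw [hid, hgather]
      calc |∑ x' : Config V, ((∑ x : Config V, ν₀ x * (Matrix.of P ^ T) x x')
              - gibbs (ham G β h) x') * f x'|
          ≤ ∑ x' : Config V, |((∑ x : Config V, ν₀ x * (Matrix.of P ^ T) x x')
              - gibbs (ham G β h) x') * f x'| := Finset.abs_sum_le_sum_abs _ _
        _ ≤ ∑ x' : Config V, |(∑ x : Config V, ν₀ x * (Matrix.of P ^ T) x x')
              - gibbs (ham G β h) x'| * F := by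
            refine Finset.sum_le_sum fun x' _ => ?_
            rw [abs_mul]
            exact mul_le_mul_of_nonneg_left (hFx x') (abs_nonneg _)
        _ = (∑ x' : Config V, |(∑ x : Config V, ν₀ x * (Matrix.of P ^ T) x x')
              - gibbs (ham G β h) x'|) * F := (Finset.sum_mul _ _ _).symm
        _ ≤ c₁ * n * (1 - c₂ / n) ^ T * F :=
            mul_le_mul_of_nonneg_right hmixT hF0
    calc |lexp ν f - μf|
        ≤ |lexp ν f - lexp ν ((Matrix.of P ^ T).mulVec f)|
          + |lexp ν ((Matrix.of P ^ T).mulVec f) - μf| :=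
          abs_sub_le _ _ _
      _ ≤ 2 * (T:ℝ) * n * (2 * F * α ^ T * γ ^ r) + c₁ * n * (1 - c₂ / n) ^ T * F := by
          refine add_le_add ?_ hB
          calc |lexp ν f - lexp ν ((Matrix.of P ^ T).mulVec f)|
              = |lexp ν ((Matrix.of P ^ T).mulVec f) - lexp ν f| := abs_sub_comm _ _
            _ ≤ (T:ℝ) * (2 * (n * (2 * F * α ^ T * γ ^ r))) := hA
            _ = 2 * (T:ℝ) * n * (2 * F * α ^ T * γ ^ r) := by ring
  -- numeric estimates via external lemmas
  rw [hαdef, hγdef] at hkey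
  have hterm1 := num_term1 (K := K) (n := n) (F := F) r T hK1 hn1 hF0 hr1 hT2
  have hterm2 := num_term2 (K := K) (n := n) (F := F) r T hK0 hn0 hF0 hc₁ hc₂ hdgn hT1
  have hkey2 : ∀ v ∈ mcVals G P Λ f,
      |v - μf| ≤ 8 * Real.exp K * n ^ 2 * F * Real.exp (-(r:ℝ))
        + c₁ * n * F * Real.exp (-(c₂ / K) * r) := by
    intro v hv
    have hkv := hkey v hv
    linarith
  have hXE : sSup (mcVals G P Λ f) - sInf (mcVals G P Λ f)
      ≤ 2 * (8 * Real.exp K * n ^ 2 * F * Real.exp (-(r:ℝ))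
        + c₁ * n * F * Real.exp (-(c₂ / K) * r)) := by
    have h1 : sSup (mcVals G P Λ f) ≤ μf
        + (8 * Real.exp K * n ^ 2 * F * Real.exp (-(r:ℝ))
          + c₁ * n * F * Real.exp (-(c₂ / K) * r)) :=
      csSup_le hne fun v hv => by
        have := abs_le.mp (hkey2 v hv); linarith
    have h2 : μf - (8 * Real.exp K * n ^ 2 * F * Real.exp (-(r:ℝ))
          + c₁ * n * F * Real.exp (-(c₂ / K) * r))
        ≤ sInf (mcVals G P Λ f) :=
      le_csInf hne fun v hv => by
        have := abs_le.mp (hkey2 v hv); linarith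
    linarith
  exact num_final r hc₁ hc₂ hK0 hn1 hF0 hXtriv hXE

end GibbsLP
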